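/- Let P be the matrix (with respect to the standard basis (e_i)) of the orthogonal projection of H onto S, so P(p,q) = ⟨e_p, P_S e_q⟩ for p, q ∈ I. For every j with 1 ≤ j ≤ k, the partial transpose P^{PT_j} is not positive semidefinite; that is, there exists ξ ∈ H with ⟨ξ, P^{PT_j} ξ⟩ < 0. In particular, the projection onto the completely entangled subspace S is NPT. -/

import Mathlib

open scoped ComplexOrder

theorem stmt_8 (k : ℕ) (hk : 2 ≤ k) (d : Fin k → ℕ) (hd : ∀ r, 2 ≤ d r)
    (u : ℕ → EuclideanSpace ℂ (∀ r, Fin (d r)))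
    (hu : ∀ n, u n = ∑ i ∈ Finset.univ.filter
        (fun i : ∀ r, Fin (d r) => ∑ r, (i r : ℕ) = n),
      EuclideanSpace.single i (1 : ℂ))
    (S : Submodule ℂ (EuclideanSpace ℂ (∀ r, Fin (d r))))
    (hS : S = (Submodule.span ℂ (u '' Set.Iic (∑ r, (d r - 1))))ᗮ)
    (P : Matrix (∀ r, Fin (d r)) (∀ r, Fin (d r)) ℂ)
    (hP : ∀ p q, P p q = (inner ℂ (EuclideanSpace.single p (1 : ℂ))
      ((S.orthogonalProjectionOnto (EuclideanSpace.single q (1 : ℂ)) : EuclideanSpace ℂ (∀ r, Fin (d r)))) : ℂ))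
    (PT : Fin k → Matrix (∀ r, Fin (d r)) (∀ r, Fin (d r)) ℂ)
    (hPT : ∀ j p q, PT j p q =
      P (Function.update p j (q j)) (Function.update q j (p j))) :
    ∀ j : Fin k, (∃ ξ : (∀ r, Fin (d r)) → ℂ,
        dotProduct (star ξ) ((PT j).mulVec ξ) < 0) ∧
      ¬ (PT j).PosSemidef := by
  classical
  intro j
  have hd0 : ∀ r, 0 < d r := fun r => lt_of_lt_of_le two_pos (hd r)
  have hd1 : ∀ r, 1 < d r := fun r => lt_of_lt_of_le one_lt_two (hd r)
  set c : ℕ → ℕ := fun n =>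
    (Finset.univ.filter (fun i : ∀ r, Fin (d r) => ∑ r, (i r : ℕ) = n)).card with hc
  -- inner products of basis vectors with u n
  have hsu : ∀ (p : ∀ r, Fin (d r)) (n : ℕ),
      (inner ℂ (EuclideanSpace.single p (1:ℂ)) (u n) : ℂ)
        = if (∑ r, (p r : ℕ)) = n then 1 else 0 := by
    intro p n
    rw [hu, inner_sum]
    simp only [EuclideanSpace.inner_single_left, map_one, one_mul,
      EuclideanSpace.single_apply]
    rw [Finset.sum_ite_eq (Finset.univ.filter _) p (fun _ => (1:ℂ))]
    simp [Finset.mem_filter]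
  have hus : ∀ (n : ℕ) (p : ∀ r, Fin (d r)),
      (inner ℂ (u n) (EuclideanSpace.single p (1:ℂ)) : ℂ)
        = if (∑ r, (p r : ℕ)) = n then 1 else 0 := by
    intro n p
    rw [← inner_conj_symm, hsu]
    split <;> simp
  have huu : ∀ m n : ℕ, (inner ℂ (u m) (u n) : ℂ) = if m = n then (c m : ℂ) else 0 := by
    intro m n
    rw [hu m, sum_inner]
    have : ∀ i ∈ Finset.univ.filter (fun i : ∀ r, Fin (d r) => ∑ r, (i r : ℕ) = m),
        (inner ℂ (EuclideanSpace.single i (1:ℂ)) (u n) : ℂ) = if m = n then 1 else 0 := by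
      intro i hi
      rw [hsu]
      rw [Finset.mem_filter] at hi
      rw [hi.2]
    rw [Finset.sum_congr rfl this]
    split <;> simp [hc]
  -- the orthogonal projection of a basis vector onto S
  have hproj : ∀ q : ∀ r, Fin (d r),
      (S.orthogonalProjectionOnto (EuclideanSpace.single q (1:ℂ))
        : EuclideanSpace ℂ (∀ r, Fin (d r)))
      = EuclideanSpace.single q (1:ℂ)
        - ((c (∑ r, (q r : ℕ)) : ℂ))⁻¹ • u (∑ r, (q r : ℕ)) := by
    intro q
    have hqmem : q ∈ Finset.univ.filter
        (fun i : ∀ r, Fin (d r) => ∑ r, (i r : ℕ) = ∑ r, (q r : ℕ)) := by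
      simp
    have hcne : ((c (∑ r, (q r : ℕ)) : ℂ)) ≠ 0 := by
      simpa [hc] using Finset.card_ne_zero_of_mem hqmem
    have hN : (∑ r, (q r : ℕ)) ∈ Set.Iic (∑ r, (d r - 1)) := by
      rw [Set.mem_Iic]
      refine Finset.sum_le_sum fun r _ => ?_
      have := (q r).is_lt
      omega
    rw [hS, ← Submodule.starProjection_apply]
    refine Submodule.eq_starProjection_of_mem_orthogonal'
      (z := ((c (∑ r, (q r : ℕ)) : ℂ))⁻¹ • u (∑ r, (q r : ℕ))) ?_ ?_ ?_
    · -- membership in the orthogonal complement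
      rw [Submodule.mem_orthogonal]
      intro x hx
      induction hx using Submodule.span_induction with
      | mem x hx =>
          obtain ⟨m, hm, rfl⟩ := hx
          rw [inner_sub_right, inner_smul_right, hus, huu]
          by_cases hmq : m = ∑ r, (q r : ℕ)
          · subst hmq
            simp [inv_mul_cancel₀ hcne]
          · simp [hmq, Ne.symm hmq]
      | zero => simp
      | add x y _ _ hx hy => rw [inner_add_left, hx, hy, add_zero]
      | smul a x _ hx => rw [inner_smul_left, hx, mul_zero]
    · -- the complementary part lies in Tᗮᗮ
      refine Submodule.le_orthogonal_orthogonal _ ?_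
      exact Submodule.smul_mem _ _ (Submodule.subset_span ⟨_, hN, rfl⟩)
    · abel
  -- entries of P
  have hPval : ∀ p q : ∀ r, Fin (d r),
      P p q = (if p = q then 1 else 0)
        - (if (∑ r, (p r : ℕ)) = (∑ r, (q r : ℕ))
            then ((c (∑ r, (q r : ℕ)) : ℂ))⁻¹ else 0) := by
    intro p q
    rw [hP, hproj, inner_sub_right, inner_smul_right, hsu,
      EuclideanSpace.inner_single_left]
    simp only [map_one, one_mul, EuclideanSpace.single_apply, mul_ite, mul_one, mul_zero]
  -- choose a second coordinate j' ≠ j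
  haveI : Nontrivial (Fin k) := Fin.nontrivial_iff_two_le.mpr hk
  obtain ⟨j', hjj'⟩ := exists_ne j
  -- the two indices a (all zeros) and b (ones at j, j')
  set a : ∀ r, Fin (d r) := fun r => ⟨0, hd0 r⟩ with ha
  set b : ∀ r, Fin (d r) := fun r =>
    if r = j ∨ r = j' then (⟨1, hd1 r⟩ : Fin (d r)) else ⟨0, hd0 r⟩ with hbdef
  have hbv : ∀ r, (b r : ℕ) = if r = j ∨ r = j' then 1 else 0 := by
    intro r
    by_cases h : r = j ∨ r = j' <;> simp [hbdef, h]
  have hsuma : (∑ r, (a r : ℕ)) = 0 := by simp [ha]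
  have hsumb : (∑ r, (b r : ℕ)) = 2 := by
    have : ∀ r : Fin k, (b r : ℕ)
        = (if r = j then 1 else 0) + (if r = j' then 1 else 0) := by
      intro r
      rw [hbv]
      by_cases h1 : r = j
      · by_cases h2 : r = j'
        · exact absurd (h1.symm.trans h2) (Ne.symm hjj')
        · simp [h1, h2, Ne.symm hjj']
      · by_cases h2 : r = j' <;> simp [h1, h2, hjj']
    rw [Finset.sum_congr rfl fun r _ => this r, Finset.sum_add_distrib,
      Finset.sum_ite_eq' Finset.univ j (fun _ => 1),
      Finset.sum_ite_eq' Finset.univ j' (fun _ => 1)]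
    simp
  -- the partially transposed indices
  have hbj : (b j : ℕ) = 1 := by simp [hbv]
  have haj : (a j : ℕ) = 0 := rfl
  set p' : ∀ r, Fin (d r) := Function.update a j (b j) with hp'
  set q' : ∀ r, Fin (d r) := Function.update b j (a j) with hq'
  have hp'v : ∀ r, (p' r : ℕ) = if r = j then 1 else 0 := by
    intro r
    by_cases h : r = j
    · subst h
      rw [hp', Function.update_self, if_pos rfl, hbj]
    · rw [hp', Function.update_of_ne h, if_neg h]
  have hq'v : ∀ r, (q' r : ℕ) = if r = j' then 1 else 0 := by
    intro r
    by_cases h : r = j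
    · subst h
      rw [hq', Function.update_self, if_neg (Ne.symm hjj'), haj]
    · rw [hq', Function.update_of_ne h, hbv]
      simp [h]
  have hsump' : (∑ r, (p' r : ℕ)) = 1 := by
    rw [Finset.sum_congr rfl fun r _ => hp'v r,
      Finset.sum_ite_eq' Finset.univ j (fun _ => 1)]
    simp
  have hsumq' : (∑ r, (q' r : ℕ)) = 1 := by
    rw [Finset.sum_congr rfl fun r _ => hq'v r,
      Finset.sum_ite_eq' Finset.univ j' (fun _ => 1)]
    simp
  have hp'q' : p' ≠ q' := by
    intro h
    have h2 : (p' j : ℕ) = (q' j : ℕ) := congrArg Fin.val (congrFun h j)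
    rw [hp'v j, hq'v j] at h2
    simp [Ne.symm hjj'] at h2
  have hab : a ≠ b := by
    intro h
    have h2 : (a j : ℕ) = (b j : ℕ) := congrArg Fin.val (congrFun h j)
    rw [haj, hbj] at h2
    exact zero_ne_one h2
  -- cardinalities
  have hc0 : c 0 = 1 := by
    have : (Finset.univ.filter (fun i : ∀ r, Fin (d r) => ∑ r, (i r : ℕ) = 0)) = {a} := by
      ext i
      simp only [Finset.mem_filter, Finset.mem_univ, true_and, Finset.mem_singleton,
        Finset.sum_eq_zero_iff]
      constructor
      · intro h
        funext r
        have h0 : ((i r : ℕ)) = 0 := h r trivial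
        exact Fin.ext (by simpa [ha] using h0)
      · rintro rfl r _
        simp [ha]
    simp only [hc]
    rw [this, Finset.card_singleton]
  have hc1ne : ((c 1 : ℂ)) ≠ 0 := by
    have : p' ∈ Finset.univ.filter (fun i : ∀ r, Fin (d r) => ∑ r, (i r : ℕ) = 1) := by
      simp [hsump']
    simpa [hc] using Finset.card_ne_zero_of_mem this
  have hc2ne : ((c 2 : ℂ)) ≠ 0 := by
    have : b ∈ Finset.univ.filter (fun i : ∀ r, Fin (d r) => ∑ r, (i r : ℕ) = 2) := by
      simp [hsumb]
    simpa [hc] using Finset.card_ne_zero_of_mem this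
  -- entries of PT j
  have hMaa : PT j a a = 0 := by
    rw [hPT, Function.update_eq_self, hPval]
    simp [hsuma, hc0]
  have hMab : PT j a b = -((c 1 : ℂ))⁻¹ := by
    rw [hPT j a b, hPval]
    rw [show Function.update a j (b j) = p' from rfl,
      show Function.update b j (a j) = q' from rfl]
    simp [hp'q', hsump', hsumq']
  have hMba : PT j b a = -((c 1 : ℂ))⁻¹ := by
    rw [hPT j b a, hPval]
    rw [show Function.update b j (a j) = q' from rfl,
      show Function.update a j (b j) = p' from rfl]
    simp [Ne.symm hp'q', hsump', hsumq']
  have hMbb : PT j b b = 1 - ((c 2 : ℂ))⁻¹ := by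
    rw [hPT, Function.update_eq_self, hPval]
    simp [hsumb]
  -- the witness vector
  set ξ : (∀ r, Fin (d r)) → ℂ := fun i =>
    (if i = a then ((c 1 : ℕ) : ℂ) else 0) + (if i = b then 1 else 0) with hξ
  have hmul : ∀ p, (PT j).mulVec ξ p = PT j p a * (c 1 : ℂ) + PT j p b := by
    intro p
    rw [Matrix.mulVec, dotProduct]
    simp only [hξ, mul_add, mul_ite, mul_zero, mul_one, Finset.sum_add_distrib,
      Finset.sum_ite_eq' Finset.univ, Finset.mem_univ, if_true]
  have hform : dotProduct (star ξ) ((PT j).mulVec ξ)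
      = (c 1 : ℂ) * ((PT j).mulVec ξ a) + ((PT j).mulVec ξ b) := by
    rw [dotProduct]
    have hstar : ∀ p, star ξ p
        = (if p = a then ((c 1 : ℕ) : ℂ) else 0) + (if p = b then 1 else 0) := by
      intro p
      simp only [Pi.star_apply, hξ, star_add, apply_ite (star : ℂ → ℂ)]
      simp
    simp only [hstar, add_mul, ite_mul, zero_mul, one_mul, Finset.sum_add_distrib,
      Finset.sum_ite_eq' Finset.univ, Finset.mem_univ, if_true]
  have hval : dotProduct (star ξ) ((PT j).mulVec ξ) = -1 - ((c 2 : ℂ))⁻¹ := by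
    rw [hform, hmul a, hmul b, hMaa, hMab, hMba, hMbb]
    field_simp
    ring
  have hneg : dotProduct (star ξ) ((PT j).mulVec ξ) < 0 := by
    rw [hval]
    have hcn : c 2 ≠ 0 := fun h => hc2ne (by simp [h])
    have hc2 : (0:ℝ) < ((c 2 : ℕ) : ℝ) := by exact_mod_cast Nat.pos_of_ne_zero hcn
    have key : (-1 - (((c 2 : ℕ) : ℝ))⁻¹ : ℝ) < 0 := by
      have h1 : (0:ℝ) < (((c 2 : ℕ) : ℝ))⁻¹ := inv_pos.mpr hc2
      linarith
    have hcast : (((-1 - (((c 2 : ℕ) : ℝ))⁻¹ : ℝ)) : ℂ) = -1 - ((c 2 : ℂ))⁻¹ := by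
      push_cast
      ring
    rw [← hcast, show (0:ℂ) = ((0:ℝ) : ℂ) from rfl, Complex.real_lt_real]
    exact key
  exact ⟨⟨ξ, hneg⟩, fun h => (h.dotProduct_mulVec_nonneg ξ).not_gt hneg⟩
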